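/- Let K : [0,∞) → ℂ be a bounded continuous function and let U ⊆ ℂ be a connected open set containing the open right half-plane {λ : Re λ > 0}. Let G : U → ℂ be holomorphic with G(λ) = ∫₀^∞ K(t)·exp(−λt) dt for all λ with Re λ > 0. Let a ∈ ℝ, let θ : [0,∞) → ℂ be continuously differentiable with compact support, let g : [0,∞) → ℂ be continuous with compact support, and suppose θ′(t) + a·(K ∗ θ)(t) = g(t) for all t ≥ 0, where (K ∗ θ)(t) = ∫₀^t K(t−s)·θ(s) ds. If λ* ∈ U satisfies λ* + a·G(λ*) = 0, then ĝ(λ*) + θ(0) = 0, where ĝ(λ) = ∫₀^∞ g(t)·exp(−λt) dt (an entire function of λ, since g has compact support). -/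

import Mathlib

open MeasureTheory

open Set Complex in
/-- If `F` vanishes on `[S, ∞)` then its integral over `Ioi 0` equals that over `Ioc 0 S`. -/
lemma mc_integral_Ioi_of_vanish {F : ℝ → ℂ} {S : ℝ}
    (h0 : ∀ t, S ≤ t → F t = 0) :
    ∫ t in Ioi (0:ℝ), F t = ∫ t in Ioc (0:ℝ) S, F t := by
  have h1 : ∀ t ∈ Ioi (0:ℝ), F t = (Ioc (0:ℝ) S).indicator F t := by
    intro t ht
    by_cases h : t ∈ Ioc (0:ℝ) S
    · rw [indicator_of_mem h]
    · rw [indicator_of_notMem h, h0 t ?_]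
      simp only [mem_Ioc, not_and, not_le] at h
      exact (h ht).le
  rw [setIntegral_congr_fun measurableSet_Ioi h1,
    setIntegral_indicator measurableSet_Ioc]
  congr 1
  rw [Set.inter_eq_right.2 Set.Ioc_subset_Ioi_self]

open Set in
lemma mc_integrableOn_Ioi_of_vanish {F : ℝ → ℂ} {S : ℝ}
    (h0 : ∀ t, S ≤ t → F t = 0) (hi : IntegrableOn F (Ioc (0:ℝ) S)) :
    IntegrableOn F (Ioi (0:ℝ)) := by
  have h2 : IntegrableOn F (Ici S) :=
    (integrableOn_zero (μ := volume)).congr_fun (fun t ht => (h0 t ht).symm)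
      measurableSet_Ici
  have h3 : IntegrableOn F (Ioc (0:ℝ) S ∪ Ici S) := hi.union h2
  refine h3.mono_set ?_
  intro t ht
  rcases le_or_gt t S with h | h
  · exact Or.inl ⟨ht, h⟩
  · exact Or.inr h.le

open Set Complex in
/-- The Laplace transform of a continuous function vanishing on `[S, ∞)` is entire. -/
lemma mc_lap_differentiable {f : ℝ → ℂ} (hf : Continuous f) {S : ℝ} (hS : 0 < S)
    (h0 : ∀ t, S ≤ t → f t = 0) :
    Differentiable ℂ (fun l : ℂ => ∫ t in Ioi (0:ℝ), f t * Complex.exp (-(l * t))) := by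
  have key : (fun l : ℂ => ∫ t in Ioi (0:ℝ), f t * Complex.exp (-(l * t)))
      = fun l : ℂ => ∫ t in Ioc (0:ℝ) S, f t * Complex.exp (-(l * t)) := by
    funext l
    exact mc_integral_Ioi_of_vanish (fun t ht => by rw [h0 t ht, zero_mul])
  rw [key]
  intro l0
  obtain ⟨Mf, hMf⟩ := (isCompact_Icc (a := (0:ℝ)) (b := S)).exists_bound_of_continuousOn
    hf.continuousOn
  have hMf0 : 0 ≤ Mf := le_trans (norm_nonneg _) (hMf 0 ⟨le_rfl, hS.le⟩)
  set C : ℝ := Mf * S * Real.exp ((‖l0‖ + 1) * S) with hC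
  have cont : ∀ l : ℂ, Continuous fun t : ℝ => f t * Complex.exp (-(l * t)) := by
    intro l
    exact hf.mul (Complex.continuous_exp.comp
      ((continuous_const.mul Complex.continuous_ofReal).neg))
  have cont' : Continuous fun t : ℝ => f t * (Complex.exp (-(l0 * t)) * (-(t:ℂ))) := by
    exact hf.mul ((Complex.continuous_exp.comp
      ((continuous_const.mul Complex.continuous_ofReal).neg)).mul
      (Complex.continuous_ofReal.neg))
  have main := hasDerivAt_integral_of_dominated_loc_of_deriv_le
    (μ := volume.restrict (Ioc (0:ℝ) S)) (x₀ := l0)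
    (F := fun (l : ℂ) (t : ℝ) => f t * Complex.exp (-(l * t)))
    (F' := fun (l : ℂ) (t : ℝ) => f t * (Complex.exp (-(l * t)) * (-(t:ℂ))))
    (bound := fun _ => C) (Metric.ball_mem_nhds l0 one_pos)
    (Filter.Eventually.of_forall fun l => (cont l).aestronglyMeasurable)
    ((cont l0).integrableOn_Ioc)
    (cont'.aestronglyMeasurable)
    ?_ ?_ ?_
  · exact main.2.differentiableAt
  · -- bound
    rw [ae_restrict_iff' measurableSet_Ioc]
    refine Filter.Eventually.of_forall fun t ht => ?_
    intro l hl
    have ht0 : 0 < t := ht.1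
    have htS : t ≤ S := ht.2
    have hnl : ‖l‖ ≤ ‖l0‖ + 1 := by
      have hd : ‖l - l0‖ ≤ 1 := by
        rw [← dist_eq_norm]; exact (Metric.mem_ball.1 hl).le
      calc ‖l‖ = ‖l0 + (l - l0)‖ := by ring_nf
        _ ≤ ‖l0‖ + ‖l - l0‖ := norm_add_le _ _
        _ ≤ ‖l0‖ + 1 := by linarith
    have hexp : ‖Complex.exp (-(l * t))‖ ≤ Real.exp ((‖l0‖ + 1) * S) := by
      rw [Complex.norm_exp]
      apply Real.exp_le_exp.2
      have : (-(l * t)).re = -(l.re * t) := by simp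
      rw [this]
      have h1 : -(l.re * t) ≤ |l.re| * t := by
        rw [neg_le]
        have : -(|l.re| * t) ≤ l.re * t := by
          have := neg_abs_le l.re
          nlinarith
        linarith
      have h2 : |l.re| ≤ ‖l‖ := Complex.abs_re_le_norm l
      calc -(l.re * t) ≤ |l.re| * t := h1
        _ ≤ (‖l0‖ + 1) * S := by nlinarith [abs_nonneg l.re, (h2.trans hnl)]
    calc ‖f t * (Complex.exp (-(l * t)) * (-(t:ℂ)))‖
        = ‖f t‖ * (‖Complex.exp (-(l * t))‖ * t) := by
          simp [norm_mul, abs_of_pos ht0]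
      _ ≤ Mf * (Real.exp ((‖l0‖ + 1) * S) * S) := by
          have hb := hMf t ⟨ht0.le, htS⟩
          have := Real.exp_pos ((‖l0‖ + 1) * S)
          apply mul_le_mul hb _ (by positivity) hMf0
          exact mul_le_mul hexp htS ht0.le (Real.exp_pos _).le
      _ = C := by rw [hC]; ring
  · exact integrableOn_const measure_Ioc_lt_top.ne
  · -- differentiability in l
    refine Filter.Eventually.of_forall fun t => ?_
    intro l _
    have h1 : HasDerivAt (fun l : ℂ => -(l * (t:ℂ))) (-(t:ℂ)) l := by
      simpa using ((hasDerivAt_id l).mul_const (t:ℂ)).fun_neg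
    exact (h1.cexp).const_mul (f t)

open Set Complex in
/-- Laplace transform of the derivative: integration by parts. -/
lemma mc_lap_deriv {θ : ℝ → ℂ} (hθ : ContDiff ℝ 1 θ) {S : ℝ} (hS : 0 < S)
    (h0 : ∀ t, S ≤ t → θ t = 0) (l : ℂ) :
    ∫ t in Ioi (0:ℝ), deriv θ t * Complex.exp (-(l * t))
      = l * (∫ t in Ioi (0:ℝ), θ t * Complex.exp (-(l * t))) - θ 0 := by
  set S' : ℝ := S + 1 with hS'
  have hS'pos : (0:ℝ) < S' := by positivity
  have hd0 : ∀ t, S' ≤ t → deriv θ t = 0 := by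
    intro t ht
    have hev : θ =ᶠ[nhds t] (fun _ => (0:ℂ)) := by
      have : Ioi S ∈ nhds t := isOpen_Ioi.mem_nhds (by simp [hS'] at ht ⊢; linarith)
      filter_upwards [this] with x hx
      exact h0 x (le_of_lt hx)
    rw [hev.deriv_eq]
    simp
  have hcd : Continuous (deriv θ) := hθ.continuous_deriv le_rfl
  have hexp_cont : Continuous fun t : ℝ => Complex.exp (-(l * t)) :=
    Complex.continuous_exp.comp ((continuous_const.mul Complex.continuous_ofReal).neg)
  rw [mc_integral_Ioi_of_vanish (S := S') (fun t ht => by rw [hd0 t ht, zero_mul]),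
    mc_integral_Ioi_of_vanish (S := S') (fun t ht => by
      rw [h0 t (by simp [hS'] at ht; linarith), zero_mul]),
    ← intervalIntegral.integral_of_le hS'pos.le, ← intervalIntegral.integral_of_le hS'pos.le]
  have hIBP := intervalIntegral.integral_mul_deriv_eq_deriv_mul_of_hasDerivAt
    (a := (0:ℝ)) (b := S')
    (u := fun t : ℝ => Complex.exp (-(l * t))) (v := θ)
    (u' := fun t : ℝ => Complex.exp (-(l * t)) * (-l)) (v' := deriv θ)
    (hexp_cont.continuousOn) (hθ.continuous.continuousOn)
    (fun x _ => by
      have h1 : HasDerivAt (fun t : ℝ => -(l * (t:ℂ))) (-l) x := by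
        have := (Complex.ofRealCLM.hasDerivAt (x := x)).const_mul l
        simpa using this.fun_neg
      exact h1.cexp)
    (fun x _ => ((hθ.differentiable one_ne_zero) x).hasDerivAt)
    ((hexp_cont.mul continuous_const).intervalIntegrable _ _)
    (hcd.intervalIntegrable _ _)
  have hθS' : θ S' = 0 := h0 S' (by simp [hS'])
  have e1 : (∫ t in (0:ℝ)..S', deriv θ t * Complex.exp (-(l * t)))
      = ∫ t in (0:ℝ)..S', Complex.exp (-(l * t)) * deriv θ t := by
    apply intervalIntegral.integral_congr
    intro x _; ring
  rw [e1, hIBP, hθS']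
  have e2 : (∫ t in (0:ℝ)..S', Complex.exp (-(l * t)) * (-l) * θ t)
      = -l * ∫ t in (0:ℝ)..S', θ t * Complex.exp (-(l * t)) := by
    rw [← intervalIntegral.integral_const_mul]
    apply intervalIntegral.integral_congr
    intro x _; ring
  rw [e2]
  simp
  ring



open Set in
lemma mc_deriv_vanish {θ : ℝ → ℂ} {S : ℝ} (h0 : ∀ t, S ≤ t → θ t = 0) :
    ∀ t, S + 1 ≤ t → deriv θ t = 0 := by
  intro t ht
  have hev : θ =ᶠ[nhds t] (fun _ => (0:ℂ)) := by
    have : Ioi S ∈ nhds t := isOpen_Ioi.mem_nhds (by simp; linarith)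
    filter_upwards [this] with x hx
    exact h0 x (le_of_lt hx)
  rw [hev.deriv_eq]
  simp

open Set Complex in
/-- Laplace transform of the convolution (Fubini). -/
lemma mc_lap_conv {K θ : ℝ → ℂ} (hKc : ContinuousOn K (Ici 0))
    {M : ℝ} (hKb : ∀ t : ℝ, 0 ≤ t → ‖K t‖ ≤ M)
    (hθc : Continuous θ) {S : ℝ} (hS : 0 < S) (h0 : ∀ t, S ≤ t → θ t = 0)
    {l : ℂ} (hl : 0 < l.re) :
    IntegrableOn (fun t => (∫ s in (0:ℝ)..t, K (t - s) * θ s) * Complex.exp (-(l * t))) (Ioi (0:ℝ))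
    ∧ (∫ t in Ioi (0:ℝ), (∫ s in (0:ℝ)..t, K (t - s) * θ s) * Complex.exp (-(l * t)))
      = (∫ t in Ioi (0:ℝ), K t * Complex.exp (-(l * t)))
        * (∫ s in Ioi (0:ℝ), θ s * Complex.exp (-(l * s))) := by
  set A : Set (ℝ × ℝ) := {p | 0 < p.1 ∧ p.1 ≤ p.2} with hAdef
  have hA : MeasurableSet A :=
    (measurableSet_lt measurable_const measurable_fst).inter
      (measurableSet_le measurable_fst measurable_snd)
  set H : ℝ × ℝ → ℂ := fun p => K (p.2 - p.1) * θ p.1 * Complex.exp (-(l * p.2)) with hHdef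
  have hexp_cont : Continuous fun t : ℝ => Complex.exp (-(l * t)) :=
    Complex.continuous_exp.comp ((continuous_const.mul Complex.continuous_ofReal).neg)
  have hHc : ContinuousOn H A := by
    apply ContinuousOn.mul
    · apply ContinuousOn.mul
      · exact hKc.comp (continuous_snd.sub continuous_fst).continuousOn
          (fun p hp => sub_nonneg.2 hp.2)
      · exact (hθc.comp continuous_fst).continuousOn
    · exact (hexp_cont.comp continuous_snd).continuousOn
  obtain ⟨Cθ, hCθ⟩ := (isCompact_Icc (a := (0:ℝ)) (b := S)).exists_bound_of_continuousOn
    hθc.continuousOn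
  have hCθ0 : 0 ≤ Cθ := le_trans (norm_nonneg _) (hCθ 0 ⟨le_rfl, hS.le⟩)
  set M' : ℝ := max M 0 with hM'
  have hM'0 : 0 ≤ M' := le_max_right _ _
  set D : ℝ × ℝ → ℝ := (Ioc (0:ℝ) S ×ˢ Ioi (0:ℝ)).indicator
    (fun p => (M' * Cθ) * Real.exp (-l.re * p.2)) with hDdef
  have hDnn : ∀ p, 0 ≤ D p := by
    intro p
    apply Set.indicator_nonneg
    intro q _
    positivity
  have hD : Integrable D volume := by
    rw [hDdef, integrable_indicator_iff (measurableSet_Ioc.prod measurableSet_Ioi)]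
    unfold IntegrableOn
    rw [Measure.volume_eq_prod, ← Measure.prod_restrict]
    have h1 : Integrable (fun _ : ℝ => M' * Cθ) (volume.restrict (Ioc (0:ℝ) S)) :=
      integrableOn_const measure_Ioc_lt_top.ne
    have h2 : Integrable (fun t : ℝ => Real.exp (-l.re * t)) (volume.restrict (Ioi (0:ℝ))) :=
      exp_neg_integrableOn_Ioi 0 hl
    exact h1.mul_prod h2
  have hnormexp : ∀ t : ℝ, ‖Complex.exp (-(l * t))‖ = Real.exp (-l.re * t) := by
    intro t
    rw [Complex.norm_exp]
    congr 1
    simp [Complex.neg_re, Complex.mul_re]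
  have hbound : ∀ p ∈ A, ‖H p‖ ≤ D p := by
    rintro ⟨s, t⟩ ⟨hs, hst⟩
    by_cases hθs : θ s = 0
    · simp only [hHdef, hθs, mul_zero, zero_mul, norm_zero]
      exact hDnn _
    · have hsS : s ≤ S := by
        by_contra hc
        exact hθs (h0 s (le_of_lt (not_le.1 hc)))
      have hmem : ((s, t) : ℝ × ℝ) ∈ Ioc (0:ℝ) S ×ˢ Ioi (0:ℝ) :=
        ⟨⟨hs, hsS⟩, lt_of_lt_of_le hs hst⟩
      rw [hDdef, indicator_of_mem hmem]
      have h1 : ‖K (t - s)‖ ≤ M' := le_trans (hKb _ (sub_nonneg.2 hst)) (le_max_left _ _)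
      have h2 : ‖θ s‖ ≤ Cθ := hCθ s ⟨hs.le, hsS⟩
      calc ‖H (s, t)‖ = ‖K (t - s)‖ * ‖θ s‖ * ‖Complex.exp (-(l * t))‖ := by
            simp [hHdef, norm_mul]
        _ ≤ M' * Cθ * Real.exp (-l.re * t) := by
            rw [hnormexp t]
            have := Real.exp_pos (-l.re * t)
            apply mul_le_mul _ le_rfl this.le (by positivity)
            exact mul_le_mul h1 h2 (norm_nonneg _) hM'0
        _ = M' * Cθ * Real.exp (-l.re * t) := rfl
  have hHi : IntegrableOn H A := by
    refine Integrable.mono' (hD.restrict) (hHc.aestronglyMeasurable hA) ?_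
    rw [ae_restrict_iff' hA]
    exact Filter.Eventually.of_forall hbound
  have hInd : Integrable (A.indicator H) volume := (integrable_indicator_iff hA).2 hHi
  have hIf : Integrable (Function.uncurry fun s t => A.indicator H (s, t))
      (volume.prod volume) := by
    rw [← Measure.volume_eq_prod]
    exact hInd
  -- inner integral over s, for fixed t
  have hinner_t : (fun t : ℝ => ∫ s : ℝ, A.indicator H (s, t))
      = (Ioi (0:ℝ)).indicator
        (fun t => (∫ s in (0:ℝ)..t, K (t - s) * θ s) * Complex.exp (-(l * t))) := by
    funext t
    rcases le_or_gt t 0 with h | h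
    · rw [indicator_of_notMem (by simpa using not_lt.2 h)]
      have hz : ∀ s : ℝ, A.indicator H (s, t) = 0 := by
        intro s
        apply indicator_of_notMem
        rintro ⟨hs1, hs2⟩
        exact absurd (lt_of_lt_of_le hs1 hs2) (not_lt.2 h)
      simp only [hz, integral_zero]
    · rw [indicator_of_mem (mem_Ioi.2 h)]
      have e : (fun s : ℝ => A.indicator H (s, t))
          = (Ioc (0:ℝ) t).indicator (fun s => K (t - s) * θ s * Complex.exp (-(l * t))) := by
        funext s
        by_cases hs : s ∈ Ioc (0:ℝ) t
        · rw [indicator_of_mem hs, indicator_of_mem (show ((s,t) : ℝ × ℝ) ∈ A from ⟨hs.1, hs.2⟩)]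
        · rw [indicator_of_notMem hs, indicator_of_notMem]
          rintro ⟨h1, h2⟩
          exact hs ⟨h1, h2⟩
      rw [e, integral_indicator measurableSet_Ioc, intervalIntegral.integral_of_le h.le]
      exact integral_mul_const _ _
  -- inner integral over t, for fixed s
  have hinner_s : (fun s : ℝ => ∫ t : ℝ, A.indicator H (s, t))
      = (Ioi (0:ℝ)).indicator
        (fun s => (∫ u in Ioi (0:ℝ), K u * Complex.exp (-(l * u)))
          * (θ s * Complex.exp (-(l * s)))) := by
    funext s
    rcases le_or_gt s 0 with h | h
    · rw [indicator_of_notMem (by simpa using not_lt.2 h)]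
      have hz : ∀ t : ℝ, A.indicator H (s, t) = 0 := by
        intro t
        apply indicator_of_notMem
        rintro ⟨hs1, _⟩
        exact absurd hs1 (not_lt.2 h)
      simp only [hz, integral_zero]
    · rw [indicator_of_mem (mem_Ioi.2 h)]
      have e : (fun t : ℝ => A.indicator H (s, t))
          = (Ici s).indicator (fun t => K (t - s) * θ s * Complex.exp (-(l * t))) := by
        funext t
        by_cases ht : t ∈ Ici s
        · rw [indicator_of_mem ht, indicator_of_mem (show ((s,t) : ℝ × ℝ) ∈ A from ⟨h, ht⟩)]
        · rw [indicator_of_notMem ht, indicator_of_notMem]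
          rintro ⟨_, h2⟩
          exact ht h2
      have step0 : (∫ t : ℝ, A.indicator H (s, t))
          = ∫ u : ℝ, (Ici s).indicator
              (fun t => K (t - s) * θ s * Complex.exp (-(l * t))) (u + s) := by
        rw [show (fun t : ℝ => A.indicator H (s, t)) = _ from e]
        exact (integral_add_right_eq_self _ s).symm
      rw [step0]
      have e2 : (fun u : ℝ => (Ici s).indicator
            (fun t => K (t - s) * θ s * Complex.exp (-(l * t))) (u + s))
          = (Ici (0:ℝ)).indicator
            (fun u => (K u * Complex.exp (-(l * u))) * (θ s * Complex.exp (-(l * s)))) := by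
        funext u
        by_cases hu : (0:ℝ) ≤ u
        · rw [indicator_of_mem (show u + s ∈ Ici s by simp [hu]),
            indicator_of_mem (show u ∈ Ici (0:ℝ) from hu)]
          have harg : -(l * ((u + s : ℝ) : ℂ)) = -(l * u) + -(l * s) := by
            push_cast; ring
          rw [add_sub_cancel_right, harg, Complex.exp_add]
          ring
        · rw [indicator_of_notMem (show u + s ∉ Ici s by simp [hu]),
            indicator_of_notMem (show u ∉ Ici (0:ℝ) from hu)]
      rw [e2, integral_indicator measurableSet_Ici, integral_Ici_eq_integral_Ioi]
      exact integral_mul_const _ _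
  have hswap := integral_integral_swap hIf
  simp only [hinner_t, hinner_s] at hswap
  rw [integral_indicator measurableSet_Ioi, integral_indicator measurableSet_Ioi] at hswap
  constructor
  · have hip := hIf.integral_prod_right
    have hip2 : Integrable ((Ioi (0:ℝ)).indicator
        (fun t => (∫ s in (0:ℝ)..t, K (t - s) * θ s) * Complex.exp (-(l * t)))) volume :=
      hip.congr (Filter.Eventually.of_forall fun t => congrFun hinner_t t)
    exact (integrable_indicator_iff measurableSet_Ioi).1 hip2
  · rw [← hswap, integral_const_mul]

open Set Complex

/-- Moment condition at a root of the characteristic function: if `G` is a holomorphic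
continuation of the Laplace transform of `K` to a connected open set `U` containing the
right half-plane, `θ' + a (K ∗ θ) = g` with `θ, g` compactly supported, and
`λ* + a G(λ*) = 0` for some `λ* ∈ U`, then `ĝ(λ*) + θ(0) = 0`. -/
theorem moment_condition_at_characteristic_root (K : ℝ → ℂ)
    (hKc : ContinuousOn K (Set.Ici 0))
    (hKb : ∃ M : ℝ, ∀ t : ℝ, 0 ≤ t → ‖K t‖ ≤ M)
    (U : Set ℂ) (hUopen : IsOpen U) (hUconn : IsConnected U)
    (hUsub : {l : ℂ | 0 < l.re} ⊆ U)
    (G : ℂ → ℂ) (hG : DifferentiableOn ℂ G U)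
    (hGeq : ∀ l : ℂ, 0 < l.re →
      G l = ∫ t in Set.Ioi (0:ℝ), K t * Complex.exp (-(l * t)))
    (a : ℝ) (θ g : ℝ → ℂ)
    (hθ : ContDiff ℝ 1 θ) (hθsupp : ∃ S : ℝ, ∀ t : ℝ, S ≤ t → θ t = 0)
    (hg : Continuous g) (hgsupp : ∃ S : ℝ, ∀ t : ℝ, S ≤ t → g t = 0)
    (heq : ∀ t : ℝ, 0 ≤ t →
      deriv θ t + (a : ℂ) * ∫ s in (0:ℝ)..t, K (t - s) * θ s = g t)
    (lstar : ℂ) (hmem : lstar ∈ U) (hroot : lstar + (a : ℂ) * G lstar = 0) :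
    (∫ t in Set.Ioi (0:ℝ), g t * Complex.exp (-(lstar * t))) + θ 0 = 0 := by
  obtain ⟨Sθ0, hSθ0⟩ := hθsupp
  obtain ⟨Sg0, hSg0⟩ := hgsupp
  obtain ⟨M, hM⟩ := hKb
  have hSθpos : (0:ℝ) < max Sθ0 1 := lt_of_lt_of_le one_pos (le_max_right _ _)
  have hSgpos : (0:ℝ) < max Sg0 1 := lt_of_lt_of_le one_pos (le_max_right _ _)
  have hθ0 : ∀ t, max Sθ0 1 ≤ t → θ t = 0 := fun t ht => hSθ0 t ((le_max_left _ _).trans ht)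
  have hg0 : ∀ t, max Sg0 1 ≤ t → g t = 0 := fun t ht => hSg0 t ((le_max_left _ _).trans ht)
  have hexp_cont : ∀ l : ℂ, Continuous fun t : ℝ => Complex.exp (-(l * t)) := fun l =>
    Complex.continuous_exp.comp ((continuous_const.mul Complex.continuous_ofReal).neg)
  set Φ : ℂ → ℂ := fun l => (∫ t in Ioi (0:ℝ), g t * Complex.exp (-(l * t))) + θ 0
    - (l + (a:ℂ) * G l) * (∫ t in Ioi (0:ℝ), θ t * Complex.exp (-(l * t))) with hΦ
  have hLθd := mc_lap_differentiable hθ.continuous hSθpos hθ0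
  have hLgd := mc_lap_differentiable hg hSgpos hg0
  have hΦd : DifferentiableOn ℂ Φ U := by
    apply DifferentiableOn.sub
    · exact hLgd.differentiableOn.add (differentiableOn_const _)
    · exact (differentiableOn_id.add ((differentiableOn_const _).mul hG)).mul
        hLθd.differentiableOn
  have hzero : ∀ l : ℂ, 0 < l.re → Φ l = 0 := by
    intro l hl
    have hconv := mc_lap_conv hKc hM hθ.continuous hSθpos hθ0 (l := l) hl
    have hder := mc_lap_deriv hθ hSθpos hθ0 l
    have hdθ0 := mc_deriv_vanish hθ0
    have hint1 : IntegrableOn (fun t => deriv θ t * Complex.exp (-(l * t))) (Ioi (0:ℝ)) :=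
      mc_integrableOn_Ioi_of_vanish (S := max Sθ0 1 + 1)
        (fun t ht => by rw [hdθ0 t ht, zero_mul])
        (((hθ.continuous_deriv le_rfl).mul (hexp_cont l)).integrableOn_Ioc)
    have hint2 := hconv.1
    have key : (∫ t in Ioi (0:ℝ), g t * Complex.exp (-(l * t)))
        = ∫ t in Ioi (0:ℝ), (deriv θ t * Complex.exp (-(l * t))
            + (a:ℂ) * ((∫ s in (0:ℝ)..t, K (t - s) * θ s) * Complex.exp (-(l * t)))) := by
      apply setIntegral_congr_fun measurableSet_Ioi
      intro t ht
      dsimp only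
      rw [← heq t (le_of_lt ht)]
      ring
    have e : (∫ t in Ioi (0:ℝ), g t * Complex.exp (-(l * t)))
        = (l * (∫ t in Ioi (0:ℝ), θ t * Complex.exp (-(l * t))) - θ 0)
          + (a:ℂ) * ((∫ t in Ioi (0:ℝ), K t * Complex.exp (-(l * t)))
            * (∫ s in Ioi (0:ℝ), θ s * Complex.exp (-(l * s)))) := by
      rw [key, integral_add hint1 (hint2.const_mul _), integral_const_mul, hder, hconv.2]
    show (∫ t in Ioi (0:ℝ), g t * Complex.exp (-(l * t))) + θ 0
      - (l + (a:ℂ) * G l) * (∫ t in Ioi (0:ℝ), θ t * Complex.exp (-(l * t))) = 0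
    rw [e, hGeq l hl]
    ring
  have hHP : IsOpen {l : ℂ | 0 < l.re} := isOpen_lt continuous_const Complex.continuous_re
  have h1mem : (1:ℂ) ∈ {l : ℂ | 0 < l.re} := by simp
  have hΦan : AnalyticOnNhd ℂ Φ U := hΦd.analyticOnNhd hUopen
  have hev : Φ =ᶠ[nhds (1:ℂ)] 0 := by
    filter_upwards [hHP.mem_nhds h1mem] with x hx
    exact hzero x hx
  have hEq := hΦan.eqOn_zero_of_preconnected_of_eventuallyEq_zero
    hUconn.isPreconnected (hUsub h1mem) hev
  have h2 : Φ lstar = 0 := hEq hmem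
  rw [hΦ] at h2
  simp only at h2
  rw [hroot, zero_mul, sub_zero] at h2
  exact h2
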